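/- Let H be a finite simple graph with minimum degree δ(H) ≥ 1 and Q ⊆ V(H) a nonempty vertex set. Then there exists an ordering v_1, v_2, …, v_e of the vertices of V(H) \ Q such that, setting H_0 to be the induced subgraph on Q and H_{i} the induced subgraph on Q ∪ {v_1,…,v_i}, the sequence of minimum degrees satisfies δ(H_i) ≤ δ(H_{i+1}) for all 0 ≤ i < e, provided δ(H_0) = 0. -/

import Mathlib

/-- Degree of `v` within the vertex set `S`. -/
def degIn {V : Type*} [DecidableEq V] (G : SimpleGraph V) [DecidableRel G.Adj]
    (S : Finset V) (v : V) : ℕ :=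
  (S.filter fun u => G.Adj v u).card

/-- Minimum degree of the induced subgraph on `S` (0 for the empty set). -/
def minDeg {V : Type*} [DecidableEq V] (G : SimpleGraph V) [DecidableRel G.Adj]
    (S : Finset V) : ℕ :=
  ((S.image (degIn G S)).min).getD 0

section Aux

variable {V : Type*} [DecidableEq V] (G : SimpleGraph V) [DecidableRel G.Adj]

lemma degIn_mono {S T : Finset V} (h : S ⊆ T) (v : V) :
    degIn G S v ≤ degIn G T v :=
  Finset.card_le_card (Finset.filter_subset_filter _ h)

lemma minDeg_le_degIn {S : Finset V} {v : V} (hv : v ∈ S) :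
    minDeg G S ≤ degIn G S v := by
  have h : (S.image (degIn G S)).min ≤ (degIn G S v : WithTop ℕ) :=
    Finset.min_le (Finset.mem_image_of_mem _ hv)
  unfold minDeg
  cases hm : (S.image (degIn G S)).min with
  | top =>
    exfalso
    have hempty : S.image (degIn G S) = ∅ := Finset.min_eq_top.1 hm
    simpa [hempty] using Finset.mem_image_of_mem (degIn G S) hv
  | coe m =>
    rw [hm] at h
    exact WithTop.coe_le_coe.1 h

lemma exists_degIn_eq_minDeg {S : Finset V} (hS : S.Nonempty) :
    ∃ u ∈ S, degIn G S u = minDeg G S := by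
  have hne : (S.image (degIn G S)).Nonempty := hS.image _
  obtain ⟨u, hu, hum⟩ := Finset.mem_image.1 (Finset.min'_mem _ hne)
  refine ⟨u, hu, ?_⟩
  have : ((S.image (degIn G S)).min' hne : WithTop ℕ) = (S.image (degIn G S)).min :=
    Finset.coe_min' hne
  rw [hum]
  unfold minDeg
  rw [← this]
  rfl

lemma exists_removal (Q S : Finset V) (hQS : Q ⊆ S) (hne : (S \ Q).Nonempty)
    (hQ0 : minDeg G Q = 0) :
    ∃ v ∈ S \ Q, minDeg G (S.erase v) ≤ minDeg G S := by
  have hSne : S.Nonempty := by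
    obtain ⟨v, hv⟩ := hne
    exact ⟨v, (Finset.mem_sdiff.1 hv).1⟩
  obtain ⟨u, hu, hudeg⟩ := exists_degIn_eq_minDeg G hSne
  by_cases h : ∃ w ∈ S \ Q, w ≠ u
  · obtain ⟨w, hw, hwu⟩ := h
    refine ⟨w, hw, ?_⟩
    calc minDeg G (S.erase w) ≤ degIn G (S.erase w) u :=
          minDeg_le_degIn G (Finset.mem_erase.2 ⟨hwu.symm, hu⟩)
      _ ≤ degIn G S u := degIn_mono G (Finset.erase_subset _ _) u
      _ = minDeg G S := hudeg
  · push_neg at h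
    obtain ⟨v, hv⟩ := hne
    have hvu : v = u := h v hv
    subst hvu
    have hvQ : v ∉ Q := (Finset.mem_sdiff.1 hv).2
    refine ⟨v, hv, ?_⟩
    have hEQ : S.erase v = Q := by
      ext x
      simp only [Finset.mem_erase]
      constructor
      · rintro ⟨hxv, hxS⟩
        by_contra hxQ
        exact hxv (h x (Finset.mem_sdiff.2 ⟨hxS, hxQ⟩))
      · intro hxQ
        exact ⟨fun hxv => hvQ (hxv ▸ hxQ), hQS hxQ⟩
    rw [hEQ, hQ0]
    exact Nat.zero_le _

lemma buildup_aux (Q : Finset V) (hQ0 : minDeg G Q = 0) :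
    ∀ n (S : Finset V), (S \ Q).card = n → Q ⊆ S →
      ∃ l : List V, l.Nodup ∧ (∀ v, v ∈ l ↔ v ∈ S \ Q) ∧ Q ∪ l.toFinset = S ∧
        ∀ i < l.length,
          minDeg G (Q ∪ (l.take i).toFinset) ≤ minDeg G (Q ∪ (l.take (i + 1)).toFinset) := by
  intro n
  induction n with
  | zero =>
    intro S hcard hQS
    have hSQ : S = Q := by
      have h1 : S \ Q = ∅ := Finset.card_eq_zero.1 hcard
      apply Finset.Subset.antisymm _ hQS
      intro x hx
      by_contra hxQ
      have : x ∈ S \ Q := Finset.mem_sdiff.2 ⟨hx, hxQ⟩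
      simp [h1] at this
    refine ⟨[], List.nodup_nil, ?_, ?_, ?_⟩
    · intro v; simp [hSQ]
    · simp [hSQ]
    · intro i hi; simp at hi
  | succ n ih =>
    intro S hcard hQS
    have hne : (S \ Q).Nonempty := by
      rw [← Finset.card_pos, hcard]; omega
    obtain ⟨v, hvSQ, hv⟩ := exists_removal G Q S hQS hne hQ0
    have hvS : v ∈ S := (Finset.mem_sdiff.1 hvSQ).1
    have hvQ : v ∉ Q := (Finset.mem_sdiff.1 hvSQ).2
    have hcard' : (S.erase v \ Q).card = n := by
      have : S.erase v \ Q = (S \ Q).erase v := by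
        ext x; simp only [Finset.mem_sdiff, Finset.mem_erase]; tauto
      rw [this, Finset.card_erase_of_mem hvSQ, hcard]
      omega
    have hQS' : Q ⊆ S.erase v := fun q hq =>
      Finset.mem_erase.2 ⟨fun h => hvQ (h ▸ hq), hQS hq⟩
    obtain ⟨l', hnd, hmem, hunion, hmono⟩ := ih (S.erase v) hcard' hQS'
    have hvl' : v ∉ l' := fun h => by
      have := (hmem v).1 h
      simp [Finset.mem_sdiff, Finset.mem_erase] at this
    refine ⟨l' ++ [v], ?_, ?_, ?_, ?_⟩
    · exact List.Nodup.append hnd (List.nodup_singleton v)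
        (List.disjoint_singleton.2 hvl')
    · intro x
      rw [List.mem_append, List.mem_singleton, hmem x]
      simp only [Finset.mem_sdiff, Finset.mem_erase]
      constructor
      · rintro (⟨⟨hxv, hxS⟩, hxQ⟩ | rfl)
        · exact ⟨hxS, hxQ⟩
        · exact ⟨hvS, hvQ⟩
      · rintro ⟨hxS, hxQ⟩
        by_cases hxv : x = v
        · exact Or.inr hxv
        · exact Or.inl ⟨⟨hxv, hxS⟩, hxQ⟩
    · rw [List.toFinset_append]
      have : Q ∪ (l'.toFinset ∪ [v].toFinset) = (Q ∪ l'.toFinset) ∪ {v} := by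
        simp [Finset.union_assoc]
      rw [this, hunion]
      ext x
      simp only [Finset.mem_union, Finset.mem_erase, Finset.mem_singleton]
      constructor
      · rintro (⟨_, hxS⟩ | rfl)
        · exact hxS
        · exact hvS
      · intro hxS
        by_cases hxv : x = v
        · exact Or.inr hxv
        · exact Or.inl ⟨hxv, hxS⟩
    · intro i hi
      rw [List.length_append, List.length_singleton] at hi
      rcases Nat.lt_or_ge i l'.length with hlt | hge
      · rw [List.take_append_of_le_length (Nat.le_of_lt hlt),
          List.take_append_of_le_length (by omega : i + 1 ≤ l'.length)]
        exact hmono i hlt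
      · have hieq : i = l'.length := by omega
        subst hieq
        rw [List.take_append_of_le_length (le_refl _), List.take_length]
        have h2 : (l' ++ [v]).take (l'.length + 1) = l' ++ [v] := by
          apply List.take_of_length_le
          simp
        rw [h2]
        have hS' : Q ∪ (l' ++ [v]).toFinset = S := by
          rw [List.toFinset_append]
          have : Q ∪ (l'.toFinset ∪ [v].toFinset) = (Q ∪ l'.toFinset) ∪ {v} := by
            simp [Finset.union_assoc]
          rw [this, hunion]
          ext x
          simp only [Finset.mem_union, Finset.mem_erase, Finset.mem_singleton]
          constructor
          · rintro (⟨_, hxS⟩ | rfl)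
            · exact hxS
            · exact hvS
          · intro hxS
            by_cases hxv : x = v
            · exact Or.inr hxv
            · exact Or.inl ⟨hxv, hxS⟩
        rw [hunion, hS']
        exact hv

end Aux

theorem monotone_buildup_order {V : Type*} [Fintype V] [DecidableEq V]
    (G : SimpleGraph V) [DecidableRel G.Adj]
    (Q : Finset V) (hQ : Q.Nonempty)
    (hδ : 1 ≤ minDeg G Finset.univ) (hQ0 : minDeg G Q = 0) :
    ∃ l : List V, l.Nodup ∧ (∀ v : V, v ∈ l ↔ v ∉ Q) ∧
      ∀ i < l.length,
        minDeg G (Q ∪ (l.take i).toFinset) ≤ minDeg G (Q ∪ (l.take (i + 1)).toFinset) := by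
  obtain ⟨l, hnd, hmem, _, hmono⟩ :=
    buildup_aux G Q hQ0 ((Finset.univ \ Q).card) Finset.univ rfl (Finset.subset_univ Q)
  exact ⟨l, hnd, fun v => by simpa using hmem v, hmono⟩
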